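/- Let 2 ≤ r ≤ m and t_0 < t_1 < ... < t_m be real numbers, and let g be defined at these points and satisfy (-1)^{m-i}(g(t_i) - g(t_{i-1})) ≥ 0 for all 1 ≤ i ≤ m. Then |[t_0, ..., t_m; g]| · ∏_{i=r}^m (t_i - t_0) ≥ |[t_1, ..., t_r; g]|. -/

import Mathlib

/-- Divided difference of order `m` of `g` at knots `t 0, …, t m`. -/
noncomputable def divDiff (m : ℕ) (t : ℕ → ℝ) (g : ℝ → ℝ) : ℝ :=
  ∑ i ∈ Finset.range (m + 1),
    g (t i) / ∏ j ∈ (Finset.range (m + 1)).erase i, (t i - t j)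

lemma shift_sum (k : ℕ) (t : ℕ → ℝ) (g : ℝ → ℝ) :
    divDiff k (fun i => t (i + 1)) g
      = ∑ i ∈ Finset.Icc 1 (k + 1),
          g (t i) / ∏ j ∈ (Finset.Icc 1 (k + 1)).erase i, (t i - t j) := by
  have he : (Finset.range (k + 1)).map ⟨(· + 1), add_left_injective 1⟩
      = Finset.Icc 1 (k + 1) := by
    ext x
    simp only [Finset.mem_map, Finset.mem_range, Function.Embedding.coeFn_mk, Finset.mem_Icc]
    constructor
    · rintro ⟨a, ha, rfl⟩; omega
    · intro hx; exact ⟨x - 1, by omega, by omega⟩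
  rw [← he, Finset.sum_map]
  unfold divDiff
  refine Finset.sum_congr rfl ?_
  intro i hi
  simp only [Function.Embedding.coeFn_mk]
  congr 1
  have h2 : ((Finset.range (k + 1)).map ⟨(· + 1), add_left_injective 1⟩).erase (i + 1)
      = ((Finset.range (k + 1)).erase i).map ⟨(· + 1), add_left_injective 1⟩ := by
    ext x
    simp only [Finset.mem_erase, Finset.mem_map, Finset.mem_range,
      Function.Embedding.coeFn_mk]
    constructor
    · rintro ⟨hx, a, ha, rfl⟩; exact ⟨a, ⟨by omega, ha⟩, rfl⟩
    · rintro ⟨a, ⟨ha1, ha2⟩, rfl⟩; exact ⟨by omega, a, ha2, rfl⟩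
  rw [h2, Finset.prod_map]
  simp

private lemma coeff_aux (g a b q : ℝ) (ha : a ≠ 0) (hb : b ≠ 0) (hq : q ≠ 0) :
    g / (a * (b * q)) * (a - b) = g / (b * q) - g / (a * q) := by
  field_simp

lemma divDiff_rec (k : ℕ) (t : ℕ → ℝ) (g : ℝ → ℝ)
    (ht : ∀ i j, i < j → j ≤ k + 1 → t i < t j) :
    divDiff (k + 1) t g * (t (k + 1) - t 0)
      = divDiff k (fun i => t (i + 1)) g - divDiff k t g := by
  have hne : ∀ i j, i ≠ j → i ≤ k + 1 → j ≤ k + 1 → t i - t j ≠ 0 := by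
    intro i j hij hi hj
    rcases Nat.lt_or_ge i j with h | h
    · have := ht i j h hj; intro hc; linarith
    · have : j < i := by omega
      have := ht j i (by omega) hi; intro hc; linarith
  have hQne : ∀ i, i ≤ k + 1 →
      (∏ j ∈ (Finset.Icc 1 k).erase i, (t i - t j)) ≠ 0 := by
    intro i hi
    refine Finset.prod_ne_zero_iff.mpr ?_
    intro j hj
    simp only [Finset.mem_erase, Finset.mem_Icc] at hj
    exact hne i j (fun h => hj.1 h.symm) hi (by omega)
  have hs : Finset.range (k + 2) = insert 0 (insert (k + 1) (Finset.Icc 1 k)) := by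
    ext x; simp [Finset.mem_insert, Finset.mem_Icc]; omega
  have hs1 : Finset.Icc 1 (k + 1) = insert (k + 1) (Finset.Icc 1 k) := by
    ext x; simp [Finset.mem_insert, Finset.mem_Icc]; omega
  have hs2 : Finset.range (k + 1) = insert 0 (Finset.Icc 1 k) := by
    ext x; simp [Finset.mem_insert, Finset.mem_Icc]; omega
  have h0nm : (0 : ℕ) ∉ insert (k + 1) (Finset.Icc 1 k) := by simp
  have h0nm' : (0 : ℕ) ∉ Finset.Icc 1 k := by simp
  have hk1nm : (k + 1) ∉ Finset.Icc 1 k := by simp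
  rw [shift_sum]
  unfold divDiff
  rw [Finset.sum_mul]
  rw [show k + 1 + 1 = k + 2 from rfl, hs, hs1, hs2]
  rw [Finset.sum_insert h0nm, Finset.sum_insert hk1nm,
    Finset.sum_insert hk1nm, Finset.sum_insert h0nm']
  have e0 : (insert 0 (insert (k + 1) (Finset.Icc 1 k))).erase 0
      = insert (k + 1) (Finset.Icc 1 k) := Finset.erase_insert h0nm
  have ek1 : (insert 0 (insert (k + 1) (Finset.Icc 1 k))).erase (k + 1)
      = insert 0 (Finset.Icc 1 k) := by
    ext x; simp [Finset.mem_insert, Finset.mem_Icc]; omega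
  have ek1' : (insert (k + 1) (Finset.Icc 1 k)).erase (k + 1)
      = Finset.Icc 1 k := Finset.erase_insert hk1nm
  have e0' : (insert 0 (Finset.Icc 1 k)).erase 0 = Finset.Icc 1 k :=
    Finset.erase_insert h0nm'
  rw [e0, ek1, ek1', e0']
  have hmid : ∀ i ∈ Finset.Icc 1 k,
      (g (t i) / ∏ j ∈ (insert 0 (insert (k + 1) (Finset.Icc 1 k))).erase i, (t i - t j))
        * (t (k + 1) - t 0)
      = (g (t i) / ∏ j ∈ (insert (k + 1) (Finset.Icc 1 k)).erase i, (t i - t j))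
        - g (t i) / ∏ j ∈ (insert 0 (Finset.Icc 1 k)).erase i, (t i - t j) := by
    intro i hi
    simp only [Finset.mem_Icc] at hi
    have hi0 : i ≠ 0 := by omega
    have hik1 : i ≠ k + 1 := by omega
    have d1 : (insert 0 (insert (k + 1) (Finset.Icc 1 k))).erase i
        = insert 0 (insert (k + 1) ((Finset.Icc 1 k).erase i)) := by
      ext x; simp [Finset.mem_insert, Finset.mem_erase, Finset.mem_Icc]; omega
    have d2 : (insert (k + 1) (Finset.Icc 1 k)).erase i
        = insert (k + 1) ((Finset.Icc 1 k).erase i) := by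
      ext x; simp [Finset.mem_insert, Finset.mem_erase, Finset.mem_Icc]; omega
    have d3 : (insert 0 (Finset.Icc 1 k)).erase i
        = insert 0 ((Finset.Icc 1 k).erase i) := by
      ext x; simp [Finset.mem_insert, Finset.mem_erase, Finset.mem_Icc]; omega
    have m1 : (0 : ℕ) ∉ insert (k + 1) ((Finset.Icc 1 k).erase i) := by simp
    have m2 : (k + 1) ∉ (Finset.Icc 1 k).erase i := by simp
    have m3 : (0 : ℕ) ∉ (Finset.Icc 1 k).erase i := by simp
    rw [d1, d2, d3, Finset.prod_insert m1, Finset.prod_insert m2, Finset.prod_insert m3]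
    have ha : t i - t 0 ≠ 0 := hne i 0 hi0 (by omega) (by omega)
    have hb : t i - t (k + 1) ≠ 0 := hne i (k + 1) hik1 (by omega) (by omega)
    have hq := hQne i (by omega : i ≤ k + 1)
    rw [show t (k + 1) - t 0 = (t i - t 0) - (t i - t (k + 1)) by ring]
    exact coeff_aux _ _ _ _ ha hb hq
  rw [Finset.sum_congr rfl hmid, Finset.sum_sub_distrib]
  have hb0 : (g (t 0) / ∏ j ∈ insert (k + 1) (Finset.Icc 1 k), (t 0 - t j))
      * (t (k + 1) - t 0) = -(g (t 0) / ∏ j ∈ Finset.Icc 1 k, (t 0 - t j)) := by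
    rw [Finset.prod_insert hk1nm]
    have hc : t 0 - t (k + 1) ≠ 0 := hne 0 (k + 1) (by omega) (by omega) (by omega)
    have hq := hQne 0 (by omega : 0 ≤ k + 1)
    rw [Finset.erase_eq_of_notMem h0nm'] at hq
    field_simp
    ring
  have hbk1 : (g (t (k + 1)) / ∏ j ∈ insert 0 (Finset.Icc 1 k), (t (k + 1) - t j))
      * (t (k + 1) - t 0)
      = g (t (k + 1)) / ∏ j ∈ Finset.Icc 1 k, (t (k + 1) - t j) := by
    rw [Finset.prod_insert h0nm']
    have hc : t (k + 1) - t 0 ≠ 0 := hne (k + 1) 0 (by omega) (by omega) (by omega)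
    have hq := hQne (k + 1) (by omega : k + 1 ≤ k + 1)
    rw [Finset.erase_eq_of_notMem hk1nm] at hq
    field_simp
  rw [hb0, hbk1]
  ring

lemma divDiff_one (t : ℕ → ℝ) (g : ℝ → ℝ) (h : t 0 < t 1) :
    divDiff 1 t g = (g (t 1) - g (t 0)) / (t 1 - t 0) := by
  have h0 : t 1 - t 0 ≠ 0 := by intro hc; linarith
  have h1 : t 0 - t 1 ≠ 0 := by intro hc; linarith
  have e : (Finset.range 2).erase 0 = {1} := by decide
  have e' : (Finset.range 2).erase 1 = {0} := by decide
  rw [divDiff]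
  rw [Finset.sum_range_succ, Finset.sum_range_one, e, e',
    Finset.prod_singleton, Finset.prod_singleton]
  field_simp
  ring

lemma mono_of_step (m : ℕ) (t : ℕ → ℝ) (ht : ∀ i < m, t i < t (i + 1)) :
    ∀ j, j ≤ m → ∀ i, i < j → t i < t j := by
  intro j
  induction j with
  | zero => omega
  | succ j ih =>
    intro hj i hi
    have h1 : t j < t (j + 1) := ht j (by omega)
    rcases Nat.lt_succ_iff_lt_or_eq.mp hi with h | h
    · exact (ih (by omega) i h).trans h1
    · rw [h]; exact h1

lemma sign_lemma (m : ℕ) (t : ℕ → ℝ) (g : ℝ → ℝ)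
    (ht : ∀ i < m, t i < t (i + 1))
    (hg : ∀ i, 1 ≤ i → i ≤ m → 0 ≤ (-1 : ℝ) ^ (m - i) * (g (t i) - g (t (i - 1)))) :
    ∀ k a, 1 ≤ k → a + k ≤ m →
      0 ≤ (-1 : ℝ) ^ (m - (a + k)) * divDiff k (fun i => t (i + a)) g := by
  have hmono := mono_of_step m t ht
  intro k
  induction k with
  | zero => omega
  | succ k ih =>
    intro a _ hak
    rcases Nat.eq_zero_or_pos k with rfl | hk
    · -- order 1
      have hlt : t a < t (a + 1) := hmono (a + 1) (by omega) a (by omega)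
      have h1 : divDiff 1 (fun i => t (i + a)) g
          = (g (t (a + 1)) - g (t a)) / (t (a + 1) - t a) := by
        have := divDiff_one (fun i => t (i + a)) g (by simpa [Nat.add_comm] using hlt)
        simpa [Nat.add_comm, Nat.zero_add] using this
      rw [h1]
      have hgg := hg (a + 1) (by omega) (by omega)
      simp only [Nat.add_sub_cancel] at hgg
      rw [mul_div_assoc']
      exact div_nonneg hgg (by linarith)
    · -- inductive step via the recurrence
      have hrec := divDiff_rec k (fun i => t (i + a)) g (by
        intro i j hij hj
        exact hmono (j + a) (by omega) (i + a) (by omega))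
      have hshift : (fun i => (fun i => t (i + a)) (i + 1)) = fun i => t (i + (a + 1)) := by
        funext i; show t (i + 1 + a) = t (i + (a + 1)); congr 1; omega
      rw [hshift] at hrec
      have hc : (0:ℝ) < t (k + 1 + a) - t (0 + a) := by
        have := hmono (k + 1 + a) (by omega) (0 + a) (by omega)
        linarith
      have h1 := ih (a + 1) hk (by omega)
      have h0 := ih a hk (by omega)
      have e1 : a + 1 + k = a + (k + 1) := by omega
      rw [e1] at h1
      have e0 : m - (a + k) = (m - (a + (k + 1))) + 1 := by omega
      rw [e0, pow_succ] at h0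
      -- h0 : 0 ≤ (-1)^(m - (a+(k+1))) * (-1) * divDiff k (fun i => t (i+a)) g
      have hD : divDiff (k + 1) (fun i => t (i + a)) g
          = (divDiff k (fun i => t (i + (a + 1))) g - divDiff k (fun i => t (i + a)) g)
            / (t (k + 1 + a) - t (0 + a)) := by
        rw [eq_div_iff (by linarith)]
        exact hrec
      rw [hD]
      rw [mul_div_assoc']
      apply div_nonneg _ (le_of_lt hc)
      have hA := h1
      have hB : (-1 : ℝ) ^ (m - (a + (k + 1))) * divDiff k (fun i => t (i + a)) g ≤ 0 := by
        nlinarith [h0]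
      nlinarith [hA, hB]

lemma abs_split (m : ℕ) (t : ℕ → ℝ) (g : ℝ → ℝ)
    (ht : ∀ i < m, t i < t (i + 1))
    (hg : ∀ i, 1 ≤ i → i ≤ m → 0 ≤ (-1 : ℝ) ^ (m - i) * (g (t i) - g (t (i - 1))))
    (k : ℕ) (hk : 1 ≤ k) (hkm : k + 1 ≤ m) :
    |divDiff (k + 1) t g| * (t (k + 1) - t 0)
      = |divDiff k (fun i => t (i + 1)) g| + |divDiff k t g| := by
  have hmono := mono_of_step m t ht
  have hc : (0:ℝ) < t (k + 1) - t 0 := by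
    have := hmono (k + 1) (by omega) 0 (by omega); linarith
  set D1 := divDiff k (fun i => t (i + 1)) g with hD1
  set D0 := divDiff k t g with hD0
  set ε : ℝ := (-1 : ℝ) ^ (m - (k + 1)) with hε
  have hε1 : |ε| = 1 := by rw [hε, abs_pow, abs_neg, abs_one, one_pow]
  have h1 : 0 ≤ ε * D1 := by
    have := sign_lemma m t g ht hg k 1 hk (by omega)
    rw [show 1 + k = k + 1 by omega] at this
    exact this
  have h0 : ε * D0 ≤ 0 := by
    have h := sign_lemma m t g ht hg k 0 hk (by omega)
    rw [show (0:ℕ) + k = k by omega] at h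
    rw [show m - k = (m - (k + 1)) + 1 by omega, pow_succ] at h
    have he : (fun i => t (i + 0)) = t := rfl
    rw [he] at h
    nlinarith [h]
  have hrec := divDiff_rec k t g (fun i j hij hj => hmono j (by omega) i hij)
  have a1 : ε * D1 = |D1| := by
    rw [← abs_of_nonneg h1, abs_mul, hε1, one_mul]
  have a0 : -(ε * D0) = |D0| := by
    rw [← abs_of_nonpos h0, abs_mul, hε1, one_mul]
  have a2 : ε * (D1 - D0) = |D1 - D0| := by
    rw [← abs_of_nonneg (by nlinarith : (0:ℝ) ≤ ε * (D1 - D0)), abs_mul, hε1, one_mul]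
  have : |divDiff (k + 1) t g| * (t (k + 1) - t 0) = |D1 - D0| := by
    rw [← abs_of_pos hc, ← abs_mul, hrec]
  rw [this, ← a2]
  have : ε * (D1 - D0) = ε * D1 - ε * D0 := by ring
  rw [this]
  linarith [a1, a0]

theorem stmt3 (m r : ℕ) (hr : 2 ≤ r) (hrm : r ≤ m) (t : ℕ → ℝ) (g : ℝ → ℝ)
    (ht : ∀ i < m, t i < t (i + 1))
    (hg : ∀ i, 1 ≤ i → i ≤ m → 0 ≤ (-1 : ℝ) ^ (m - i) * (g (t i) - g (t (i - 1)))) :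
    |divDiff (r - 1) (fun i => t (i + 1)) g| ≤
      |divDiff m t g| * ∏ i ∈ Finset.Icc r m, (t i - t 0) := by
  have hmono := mono_of_step m t ht
  have hpos : ∀ j, 1 ≤ j → j ≤ m → (0:ℝ) < t j - t 0 := by
    intro j h1 h2
    have := hmono j h2 0 (by omega); linarith
  -- chain: for 2 ≤ j ≤ m, |divDiff j t g| ≤ |divDiff m t g| * ∏_{Icc (j+1) m} (t i - t 0)
  have claim : ∀ n j, j + n = m → 2 ≤ j →
      |divDiff j t g| ≤ |divDiff m t g| * ∏ i ∈ Finset.Icc (j + 1) m, (t i - t 0) := by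
    intro n
    induction n with
    | zero =>
      intro j hj _
      have : j = m := by omega
      subst this
      rw [show Finset.Icc (j + 1) j = ∅ from Finset.Icc_eq_empty (by omega)]
      simp
    | succ n ihn =>
      intro j hj h2
      have ih := ihn (j + 1) (by omega) (by omega)
      have hsplit := abs_split m t g ht hg j (by omega) (by omega)
      have hc : (0:ℝ) < t (j + 1) - t 0 := hpos (j + 1) (by omega) (by omega)
      have habs : 0 ≤ |divDiff j (fun i => t (i + 1)) g| := abs_nonneg _
      have step : |divDiff j t g| ≤ |divDiff (j + 1) t g| * (t (j + 1) - t 0) := by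
        rw [hsplit]; linarith
      have hins : Finset.Icc (j + 1) m = insert (j + 1) (Finset.Icc (j + 2) m) := by
        ext x; simp [Finset.mem_insert, Finset.mem_Icc]; omega
      have hnm : (j + 1) ∉ Finset.Icc (j + 2) m := by simp
      rw [hins, Finset.prod_insert hnm]
      calc |divDiff j t g| ≤ |divDiff (j + 1) t g| * (t (j + 1) - t 0) := step
        _ ≤ (|divDiff m t g| * ∏ i ∈ Finset.Icc (j + 2) m, (t i - t 0)) * (t (j + 1) - t 0) :=
            mul_le_mul_of_nonneg_right ih (le_of_lt hc)
        _ = |divDiff m t g| * ((t (j + 1) - t 0) * ∏ i ∈ Finset.Icc (j + 2) m, (t i - t 0)) := by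
            ring
  have hchain := claim (m - r) r (by omega) hr
  have hsplit := abs_split m t g ht hg (r - 1) (by omega) (by omega)
  rw [show r - 1 + 1 = r by omega] at hsplit
  have hc : (0:ℝ) < t r - t 0 := hpos r (by omega) (by omega)
  have step : |divDiff (r - 1) (fun i => t (i + 1)) g| ≤ |divDiff r t g| * (t r - t 0) := by
    rw [hsplit]
    have := abs_nonneg (divDiff (r - 1) t g)
    linarith
  have hins : Finset.Icc r m = insert r (Finset.Icc (r + 1) m) := by
    ext x; simp [Finset.mem_insert, Finset.mem_Icc]; omega
  have hnm : r ∉ Finset.Icc (r + 1) m := by simp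
  rw [hins, Finset.prod_insert hnm]
  calc |divDiff (r - 1) (fun i => t (i + 1)) g| ≤ |divDiff r t g| * (t r - t 0) := step
    _ ≤ (|divDiff m t g| * ∏ i ∈ Finset.Icc (r + 1) m, (t i - t 0)) * (t r - t 0) :=
        mul_le_mul_of_nonneg_right hchain (le_of_lt hc)
    _ = |divDiff m t g| * ((t r - t 0) * ∏ i ∈ Finset.Icc (r + 1) m, (t i - t 0)) := by ring
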